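/- Fix n ≥ 3 and 2 ≤ i ≤ n−1. Let Δ := δ + 4ε − 2ε², m := cε/Δ, n₀ := c(δ+2ε)/Δ, and define x† ∈ ℝ^n by x†_{i−1} = x†_{i+1} = m, x†_i = n₀, and x†_k = 0 otherwise. Then: (a) Δ > 0, m > 0, n₀ > 0; (b) x† = [W x† + θ]_+, i.e. x† is an equilibrium of the CSTLN; (c) y_{i−1}(x†) = m > 0, y_i(x†) = n₀ > 0, y_{i+1}(x†) = m > 0; (d) if i ≥ 3 then y_{i−2}(x†) = −c(δ² + 3δε + ε²)/Δ < 0, if i ≤ n−2 then y_{i+2}(x†) = −c(δ² + 3δε + ε²)/Δ < 0, and y_k(x†) < 0 for every k with min-distance from {i−1,i,i+1} greater than 1. Hence x† lies in the triple-support cell C_{{i−1,i,i+1}}. -/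

import Mathlib

open Matrix

/-- triple-support saddle equilibrium of a CSTLN.
Indices are 0-based: the support is `{i−1, i, i+1}` with `1 ≤ i` and `i + 1 < n`
(corresponding to the 1-based statement `2 ≤ i ≤ n−1`). -/
theorem cstln_triple_support_saddle_point (n i : ℕ) (hn : 3 ≤ n)
    (hi1 : 1 ≤ i) (hi2 : i + 1 < n)
    (ε δ c : ℝ) (hε : 0 < ε) (hε1 : ε < 1) (hδ : 0 < δ) (hc : 0 < c)
    (W : Matrix (Fin n) (Fin n) ℝ)
    (hW : ∀ k l : Fin n, W k l =
      if (k : ℕ) = (l : ℕ) then 0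
      else if ((k : ℤ) - (l : ℤ)).natAbs = 1 then -1 + ε else -1 - δ)
    (θ : Fin n → ℝ) (hθ : ∀ k, θ k = c)
    (Δ m n₀ : ℝ) (hΔ : Δ = δ + 4 * ε - 2 * ε ^ 2)
    (hm : m = c * ε / Δ) (hn₀ : n₀ = c * (δ + 2 * ε) / Δ)
    (xd : Fin n → ℝ)
    (hxd : ∀ k : Fin n, xd k =
      if (k : ℕ) = i - 1 ∨ (k : ℕ) = i + 1 then m
      else if (k : ℕ) = i then n₀ else 0)
    (y : Fin n → ℝ) (hy : ∀ k, y k = W.mulVec xd k + θ k) :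
    -- (a) positivity of Δ, m, n₀
    (0 < Δ ∧ 0 < m ∧ 0 < n₀) ∧
    -- (b) x† is an equilibrium of the CSTLN
    (∀ k, xd k = max (y k) 0) ∧
    -- (c) on-support values of y
    (y ⟨i - 1, by omega⟩ = m ∧ 0 < y ⟨i - 1, by omega⟩ ∧
     y ⟨i, by omega⟩ = n₀ ∧ 0 < y ⟨i, by omega⟩ ∧
     y ⟨i + 1, by omega⟩ = m ∧ 0 < y ⟨i + 1, by omega⟩) ∧
    -- (d) off-support values of y
    (∀ _ : 2 ≤ i, y ⟨i - 2, by omega⟩ = -(c * (δ ^ 2 + 3 * δ * ε + ε ^ 2)) / Δ ∧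
      y ⟨i - 2, by omega⟩ < 0) ∧
    (∀ _ : i + 2 < n, y ⟨i + 2, by omega⟩ = -(c * (δ ^ 2 + 3 * δ * ε + ε ^ 2)) / Δ ∧
      y ⟨i + 2, by omega⟩ < 0) ∧
    (∀ k : Fin n,
      1 < min (min ((k : ℤ) - ((i : ℤ) - 1)).natAbs ((k : ℤ) - (i : ℤ)).natAbs)
        ((k : ℤ) - ((i : ℤ) + 1)).natAbs →
      y k < 0) ∧
    -- hence x† lies in the triple-support cell C_{i−1,i,i+1}
    (∀ k : Fin n, ((k : ℕ) = i - 1 ∨ (k : ℕ) = i ∨ (k : ℕ) = i + 1) → 0 < y k) ∧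
    (∀ k : Fin n, ¬((k : ℕ) = i - 1 ∨ (k : ℕ) = i ∨ (k : ℕ) = i + 1) → y k < 0) := by
  subst hΔ hm hn₀
  have hΔpos : (0:ℝ) < δ + 4 * ε - 2 * ε ^ 2 := by nlinarith
  have hΔ0 : (δ + 4 * ε - 2 * ε ^ 2) ≠ 0 := ne_of_gt hΔpos
  have hD' : δ + ε * 4 - ε ^ 2 * 2 ≠ 0 := by intro h; apply hΔ0; linarith
  have hMpos : 0 < c * ε / (δ + 4 * ε - 2 * ε ^ 2) := by positivity
  have hNpos : 0 < c * (δ + 2 * ε) / (δ + 4 * ε - 2 * ε ^ 2) := by positivity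
  -- W entry lemmas
  have Wdiag : ∀ k l : Fin n, (k : ℕ) = (l : ℕ) → W k l = 0 := by
    intro k l h; rw [hW, if_pos h]
  have Wadj : ∀ k l : Fin n, ((k : ℤ) - (l : ℤ)).natAbs = 1 → W k l = -1 + ε := by
    intro k l h; rw [hW, if_neg (by omega), if_pos h]
  have Wfar : ∀ k l : Fin n, 1 < ((k : ℤ) - (l : ℤ)).natAbs → W k l = -1 - δ := by
    intro k l h; rw [hW, if_neg (by omega), if_neg (by omega)]
  -- the three support indices
  have hab : (⟨i - 1, by omega⟩ : Fin n) ≠ ⟨i, by omega⟩ := by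
    simp only [ne_eq, Fin.mk.injEq]; omega
  have hac : (⟨i - 1, by omega⟩ : Fin n) ≠ ⟨i + 1, by omega⟩ := by
    simp only [ne_eq, Fin.mk.injEq]; omega
  have hbc : (⟨i, by omega⟩ : Fin n) ≠ ⟨i + 1, by omega⟩ := by
    simp only [ne_eq, Fin.mk.injEq]; omega
  -- key computation of y
  have key : ∀ k : Fin n, y k =
      W k ⟨i - 1, by omega⟩ * (c * ε / (δ + 4 * ε - 2 * ε ^ 2))
      + W k ⟨i, by omega⟩ * (c * (δ + 2 * ε) / (δ + 4 * ε - 2 * ε ^ 2))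
      + W k ⟨i + 1, by omega⟩ * (c * ε / (δ + 4 * ε - 2 * ε ^ 2)) + c := by
    intro k
    rw [hy, hθ]
    have : W.mulVec xd k = ∑ l ∈ ({⟨i - 1, by omega⟩, ⟨i, by omega⟩, ⟨i + 1, by omega⟩} :
        Finset (Fin n)), W k l * xd l := by
      rw [mulVec, dotProduct]
      refine (Finset.sum_subset (Finset.subset_univ _) ?_).symm
      intro l _ hl
      simp only [Finset.mem_insert, Finset.mem_singleton, Fin.ext_iff, Fin.val_mk] at hl
      have h1 : ¬((l : ℕ) = i - 1 ∨ (l : ℕ) = i + 1) := by omega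
      have h2 : ¬((l : ℕ) = i) := by omega
      rw [hxd, if_neg h1, if_neg h2, mul_zero]
    rw [this, Finset.sum_insert (by simp [hab, hac]),
      Finset.sum_insert (by simp [hbc]), Finset.sum_singleton,
      hxd, hxd, hxd]
    simp only [Fin.val_mk]
    have c2 : ¬(i = i - 1 ∨ i = i + 1) := by omega
    simp only [true_or, or_true, if_true, if_neg c2]
    ring
  -- on-support values
  have yA : y ⟨i - 1, by omega⟩ = c * ε / (δ + 4 * ε - 2 * ε ^ 2) := by
    rw [key, Wdiag ⟨i - 1, by omega⟩ ⟨i - 1, by omega⟩ rfl,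
      Wadj ⟨i - 1, by omega⟩ ⟨i, by omega⟩ (by simp only [Fin.val_mk]; omega),
      Wfar ⟨i - 1, by omega⟩ ⟨i + 1, by omega⟩ (by simp only [Fin.val_mk]; omega)]
    field_simp
    ring
  have yB : y ⟨i, by omega⟩ = c * (δ + 2 * ε) / (δ + 4 * ε - 2 * ε ^ 2) := by
    rw [key, Wdiag ⟨i, by omega⟩ ⟨i, by omega⟩ rfl,
      Wadj ⟨i, by omega⟩ ⟨i - 1, by omega⟩ (by simp only [Fin.val_mk]; omega),
      Wadj ⟨i, by omega⟩ ⟨i + 1, by omega⟩ (by simp only [Fin.val_mk]; omega)]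
    field_simp
    ring
  have yC : y ⟨i + 1, by omega⟩ = c * ε / (δ + 4 * ε - 2 * ε ^ 2) := by
    rw [key, Wdiag ⟨i + 1, by omega⟩ ⟨i + 1, by omega⟩ rfl,
      Wadj ⟨i + 1, by omega⟩ ⟨i, by omega⟩ (by simp only [Fin.val_mk]; omega),
      Wfar ⟨i + 1, by omega⟩ ⟨i - 1, by omega⟩ (by simp only [Fin.val_mk]; omega)]
    field_simp
    ring
  -- near off-support values
  have Qneg : -(c * (δ ^ 2 + 3 * δ * ε + ε ^ 2)) / (δ + 4 * ε - 2 * ε ^ 2) < 0 := by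
    have h1 : 0 < c * (δ ^ 2 + 3 * δ * ε + ε ^ 2) := by positivity
    have := div_pos h1 hΔpos
    rw [neg_div]
    linarith
  have yNear : ∀ k : Fin n, ((k : ℤ) = (i : ℤ) - 2 ∨ (k : ℤ) = (i : ℤ) + 2) →
      y k = -(c * (δ ^ 2 + 3 * δ * ε + ε ^ 2)) / (δ + 4 * ε - 2 * ε ^ 2) := by
    intro k hk
    rcases hk with hk | hk
    · rw [key, Wadj k ⟨i - 1, by omega⟩ (by simp only [Fin.val_mk]; omega),
        Wfar k ⟨i, by omega⟩ (by simp only [Fin.val_mk]; omega),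
        Wfar k ⟨i + 1, by omega⟩ (by simp only [Fin.val_mk]; omega)]
      field_simp
      ring
    · rw [key, Wfar k ⟨i - 1, by omega⟩ (by simp only [Fin.val_mk]; omega),
        Wfar k ⟨i, by omega⟩ (by simp only [Fin.val_mk]; omega),
        Wadj k ⟨i + 1, by omega⟩ (by simp only [Fin.val_mk]; omega)]
      field_simp
      ring
  -- far off-support values
  have yFar : ∀ k : Fin n, ((k : ℤ) < (i : ℤ) - 2 ∨ (i : ℤ) + 2 < (k : ℤ)) → y k < 0 := by
    intro k hk
    have hval : y k = -(c * (δ ^ 2 + 4 * δ * ε + 2 * ε ^ 2)) / (δ + 4 * ε - 2 * ε ^ 2) := by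
      rw [key, Wfar k ⟨i - 1, by omega⟩ (by simp only [Fin.val_mk]; omega),
        Wfar k ⟨i, by omega⟩ (by simp only [Fin.val_mk]; omega),
        Wfar k ⟨i + 1, by omega⟩ (by simp only [Fin.val_mk]; omega)]
      field_simp
      ring
    rw [hval]
    have h1 : 0 < c * (δ ^ 2 + 4 * δ * ε + 2 * ε ^ 2) := by positivity
    have := div_pos h1 hΔpos
    rw [neg_div]
    linarith
  -- all off-support indices are negative
  have off : ∀ k : Fin n, ¬((k : ℕ) = i - 1 ∨ (k : ℕ) = i ∨ (k : ℕ) = i + 1) → y k < 0 := by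
    intro k hk
    push_neg at hk
    by_cases h1 : (k : ℤ) = (i : ℤ) - 2 ∨ (k : ℤ) = (i : ℤ) + 2
    · rw [yNear k h1]; exact Qneg
    · exact yFar k (by omega)
  refine ⟨⟨hΔpos, hMpos, hNpos⟩, ?_, ⟨yA, by rw [yA]; exact hMpos, yB, by rw [yB]; exact hNpos,
    yC, by rw [yC]; exact hMpos⟩, ?_, ?_, ?_, ?_, off⟩
  · -- equilibrium
    intro k
    rw [hxd]
    by_cases h1 : (k : ℕ) = i - 1 ∨ (k : ℕ) = i + 1
    · rw [if_pos h1]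
      rcases h1 with h1 | h1
      · have hkeq : k = ⟨i - 1, by omega⟩ := by exact Fin.ext h1
        rw [hkeq, yA, max_eq_left hMpos.le]
      · have hkeq : k = ⟨i + 1, by omega⟩ := by exact Fin.ext h1
        rw [hkeq, yC, max_eq_left hMpos.le]
    · rw [if_neg h1]
      by_cases h2 : (k : ℕ) = i
      · rw [if_pos h2]
        have hkeq : k = ⟨i, by omega⟩ := by exact Fin.ext h2
        rw [hkeq, yB, max_eq_left hNpos.le]
      · rw [if_neg h2]
        have := off k (by tauto)
        rw [max_eq_right this.le]
  · -- y at i - 2 for 2 ≤ i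
    intro h2i
    constructor
    · exact yNear _ (by left; simp only [Fin.val_mk]; omega)
    · rw [yNear _ (by left; simp only [Fin.val_mk]; omega)]; exact Qneg
  · -- y at i + 2 for i + 2 < n
    intro h2i
    constructor
    · exact yNear _ (by right; simp only [Fin.val_mk]; omega)
    · rw [yNear _ (by right; simp only [Fin.val_mk]; omega)]; exact Qneg
  · -- far negativity by min-distance
    intro k hk
    simp only [lt_min_iff] at hk
    exact off k (by omega)
  · -- on-support positivity
    intro k hk
    rcases hk with h | h | h
    · have hkeq : k = ⟨i - 1, by omega⟩ := Fin.ext h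
      rw [hkeq, yA]; exact hMpos
    · have hkeq : k = ⟨i, by omega⟩ := Fin.ext h
      rw [hkeq, yB]; exact hNpos
    · have hkeq : k = ⟨i + 1, by omega⟩ := Fin.ext h
      rw [hkeq, yC]; exact hMpos
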